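/- Let f, g be entire functions on ℂⁿ, Ω ⊆ ℂⁿ a connected set, and C ⊆ ℂ a closed set whose complement has exactly two connected components A and B. If the function h(z,w) = f(z) + w·g(z) is non-zero for all z ∈ Ω and w ∈ C, and g is non-zero on Ω, then either h is non-zero on Ω × (A ∪ C) or h is non-zero on Ω × (B ∪ C). -/

import Mathlib

open Complex

theorem stmt_2 (n : ℕ) (f g : (Fin n → ℂ) → ℂ)
    (hf : Differentiable ℂ f) (hg : Differentiable ℂ g)
    (Ω : Set (Fin n → ℂ)) (hΩ : IsConnected Ω)
    (C A B : Set ℂ) (hC : IsClosed C)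
    (hA : IsOpen A) (hB : IsOpen B)
    (hAc : IsConnected A) (hBc : IsConnected B)
    (hAB : Disjoint A B) (hunion : A ∪ B = Cᶜ)
    (hgz : ∀ z ∈ Ω, g z ≠ 0)
    (hh : ∀ z ∈ Ω, ∀ w ∈ C, f z + w * g z ≠ 0) :
    (∀ z ∈ Ω, ∀ w ∈ A ∪ C, f z + w * g z ≠ 0) ∨
    (∀ z ∈ Ω, ∀ w ∈ B ∪ C, f z + w * g z ≠ 0) := by
  set φ : (Fin n → ℂ) → ℂ := fun z => -f z / g z with hφ
  -- h(z,w) = 0 iff w = φ z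
  have key : ∀ z ∈ Ω, ∀ w : ℂ, f z + w * g z = 0 ↔ w = φ z := by
    intro z hz w
    have hgz' := hgz z hz
    constructor
    · intro h
      simp only [hφ]
      field_simp
      linear_combination h
    · intro h
      subst h
      simp only [hφ]
      field_simp
      ring
  -- φ maps Ω into A ∪ B
  have himg : φ '' Ω ⊆ A ∪ B := by
    rintro _ ⟨z, hz, rfl⟩
    rw [hunion]
    intro hc
    exact hh z hz _ hc ((key z hz _).mpr rfl)
  -- φ continuous on Ω
  have hcont : ContinuousOn φ Ω := by
    apply ContinuousOn.div
    · exact (hf.continuous.neg).continuousOn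
    · exact hg.continuous.continuousOn
    · exact hgz
  have hconn : IsPreconnected (φ '' Ω) :=
    (hΩ.image φ hcont).isPreconnected
  rcases hconn.subset_or_subset hA hB hAB himg with h | h
  · -- image ⊆ A, so h ≠ 0 on Ω × (B ∪ C)
    right
    intro z hz w hw h0
    have hw' : w = φ z := (key z hz w).mp h0
    have hwA : w ∈ A := by rw [hw']; exact h ⟨z, hz, rfl⟩
    rcases hw with hwB | hwC
    · exact hAB.ne_of_mem hwA hwB rfl
    · have : w ∈ Cᶜ := hunion ▸ Or.inl hwA
      exact this hwC
  · left
    intro z hz w hw h0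
    have hw' : w = φ z := (key z hz w).mp h0
    have hwB : w ∈ B := by rw [hw']; exact h ⟨z, hz, rfl⟩
    rcases hw with hwA | hwC
    · exact hAB.ne_of_mem hwA hwB rfl
    · have : w ∈ Cᶜ := hunion ▸ Or.inr hwB
      exact this hwC
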